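/- For every integer n ≥ −1: (i) the derived subalgebra [F_nO, F_nO] equals span{U_{2n+3+k} − 4·U_{2n+1+k} : k ∈ ℕ}, and the quotient vector space F_nO/[F_nO, F_nO] has dimension n + 3; (ii) the derived subalgebra [F_n b, F_n b] equals [F_nO, F_nO] ⊕ span{V_{2n+1+k} : k ∈ ℕ}, and the quotient vector space F_n b/[F_n b, F_n b] has dimension 2n + 4. -/

import Mathlib

section Aux
variable {k : Type*} [CommRing k] {b : Type*} [LieRing b] [LieAlgebra k b]

lemma lie_mem_span_brackets {S T : Set b} {y z : b}
    (hy : y ∈ Submodule.span k S) (hz : z ∈ Submodule.span k T) :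
    ⁅y, z⁆ ∈ Submodule.span k {x : b | ∃ u ∈ S, ∃ v ∈ T, x = ⁅u, v⁆} := by
  induction hy using Submodule.span_induction with
  | mem u hu =>
    induction hz using Submodule.span_induction with
    | mem v hv => exact Submodule.subset_span ⟨u, hu, v, hv, rfl⟩
    | zero => simp
    | add a c _ _ ha hc => rw [lie_add]; exact add_mem ha hc
    | smul r a _ ha => rw [lie_smul]; exact Submodule.smul_mem _ r ha
  | zero => simp
  | add a c _ _ ha hc => rw [add_lie]; exact add_mem ha hc
  | smul r a _ ha => rw [smul_lie]; exact Submodule.smul_mem _ r ha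

lemma span_brackets_eq (S T : Set b) :
    Submodule.span k {x : b | ∃ y ∈ Submodule.span k S, ∃ z ∈ Submodule.span k T, x = ⁅y, z⁆}
      = Submodule.span k {x : b | ∃ u ∈ S, ∃ v ∈ T, x = ⁅u, v⁆} := by
  refine le_antisymm (Submodule.span_le.2 ?_) (Submodule.span_mono ?_)
  · rintro x ⟨y, hy, z, hz, rfl⟩
    exact lie_mem_span_brackets hy hz
  · rintro x ⟨u, hu, v, hv, rfl⟩
    exact ⟨u, Submodule.subset_span hu, v, Submodule.subset_span hv, rfl⟩

end Aux

def rfun (k : Type*) [Field k] (m : ℕ) (i : ℕ) : Fin (m + 2) → k :=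
  if h : i < 2 * m + 2 then
    if h2 : m ≤ i then Pi.single (⟨i - m, by omega⟩ : Fin (m + 2)) 1 else 0
  else (4 : k) • rfun k m (i - 2)
termination_by i
decreasing_by omega

def sfun (k : Type*) [Field k] (m : ℕ) (i : ℕ) : Fin m → k :=
  if h : m ≤ i ∧ i < 2 * m then Pi.single (⟨i - m, by omega⟩ : Fin m) 1 else 0

lemma rfun_high (k : Type*) [Field k] (m j : ℕ) :
    rfun k m (2 * m + 2 + j) = (4 : k) • rfun k m (2 * m + j) := by
  rw [rfun]
  rw [dif_neg (by omega)]
  have : 2 * m + 2 + j - 2 = 2 * m + j := by omega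
  rw [this]

lemma rfun_single (k : Type*) [Field k] (m : ℕ) (t : Fin (m + 2)) :
    rfun k m (m + t) = Pi.single t 1 := by
  have ht := t.isLt
  rw [rfun, dif_pos (by omega), dif_pos (by omega)]
  simp only [show m + (t : ℕ) - m = (t : ℕ) from by omega, Fin.eta]

lemma sfun_single (k : Type*) [Field k] (m : ℕ) (t : Fin m) :
    sfun k m (m + t) = Pi.single t 1 := by
  have ht := t.isLt
  rw [sfun, dif_pos (by omega)]
  simp only [show m + (t : ℕ) - m = (t : ℕ) from by omega, Fin.eta]


lemma sfun_high (k : Type*) [Field k] (m j : ℕ) : sfun k m (2 * m + j) = 0 := by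
  rw [sfun, dif_neg (by omega)]

/-- Let `k` be a field of characteristic zero and `b` the (centreless) BCCA: the Lie algebra with
basis `{U_n, V_n : n ≥ -1}` and brackets `[U_n,U_m] = (n−m)(U_{n+m+2} − 4U_{n+m})`,
`[U_n,V_m] = (n−m+1)V_{n+m+2} − 4(n−m)V_{n+m}`, `[V_n,V_m] = 0`.  Below the basis is re-indexed
by `ℕ`: `Uf i` and `Vf i` stand for `U_{i−1}` and `V_{i−1}`, so `n ≥ −1` corresponds to
`m := n + 1 ∈ ℕ`, and `F_nO = span{Uf j : j ≥ m}`, `F_n b = span{Uf j, Vf j : j ≥ m}`.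
Then, for every `m` (i.e. every integer `n = m − 1 ≥ −1`):
(i) `[F_nO, F_nO] = span{U_{2n+3+j} − 4·U_{2n+1+j} : j ∈ ℕ}` (indices `2m+2+j`, `2m+j` after
re-indexing) and `dim F_nO/[F_nO,F_nO] = n + 3 = m + 2`;
(ii) `[F_n b, F_n b] = [F_nO, F_nO] ⊕ span{V_{2n+1+j} : j ∈ ℕ}` (index `2m+j` after
re-indexing) and `dim F_n b/[F_n b, F_n b] = 2n + 4 = 2m + 2`. -/
theorem bcca_filtration_derived_subalgebras_and_abelianisations
    {k : Type*} [Field k] [CharZero k]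
    {b : Type*} [LieRing b] [LieAlgebra k b]
    (Uf Vf : ℕ → b)
    (hindep : LinearIndependent k (Sum.elim Uf Vf))
    (hspan : Submodule.span k (Set.range Uf ∪ Set.range Vf) = ⊤)
    (hUU : ∀ i j : ℕ, ⁅Uf i, Uf j⁆ =
      (((i : ℤ) - (j : ℤ)) : k) • (Uf (i + j + 1) - (4 : k) • Uf (i + j - 1)))
    (hUV : ∀ i j : ℕ, ⁅Uf i, Vf j⁆ =
      (((i : ℤ) - (j : ℤ) + 1) : k) • Vf (i + j + 1)
        - ((4 * ((i : ℤ) - (j : ℤ))) : k) • Vf (i + j - 1))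
    (hVV : ∀ i j : ℕ, ⁅Vf i, Vf j⁆ = 0)
    (m : ℕ)
    (FO : Submodule k b)
    (hFO : FO = Submodule.span k (Set.range fun j : ℕ => Uf (m + j)))
    (Fb : Submodule k b)
    (hFb : Fb = Submodule.span k
      (Set.range (fun j : ℕ => Uf (m + j)) ∪ Set.range (fun j : ℕ => Vf (m + j))))
    -- the derived subalgebras `[F_nO, F_nO]` and `[F_n b, F_n b]`
    (DO : Submodule k b)
    (hDO : DO = Submodule.span k {x : b | ∃ y ∈ FO, ∃ z ∈ FO, x = ⁅y, z⁆})
    (Db : Submodule k b)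
    (hDb : Db = Submodule.span k {x : b | ∃ y ∈ Fb, ∃ z ∈ Fb, x = ⁅y, z⁆}) :
    -- (i)
    (DO = Submodule.span k
        (Set.range fun j : ℕ => Uf (2 * m + 2 + j) - (4 : k) • Uf (2 * m + j)) ∧
      Module.finrank k (FO ⧸ Submodule.comap FO.subtype DO) = m + 2) ∧
    -- (ii)
    (Db = DO ⊔ Submodule.span k (Set.range fun j : ℕ => Vf (2 * m + j)) ∧
      DO ⊓ Submodule.span k (Set.range fun j : ℕ => Vf (2 * m + j)) = ⊥ ∧
      Module.finrank k (Fb ⧸ Submodule.comap Fb.subtype Db) = 2 * m + 2) := by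
  classical
  set W : ℕ → b := fun j => Uf (2 * m + 2 + j) - (4 : k) • Uf (2 * m + j) with hWdef
  -- membership of generators
  have hUFO : ∀ j : ℕ, Uf (m + j) ∈ FO := fun j => hFO ▸ Submodule.subset_span ⟨j, rfl⟩
  have hUFb : ∀ j : ℕ, Uf (m + j) ∈ Fb := fun j =>
    hFb ▸ Submodule.subset_span (Or.inl ⟨j, rfl⟩)
  have hVFb : ∀ j : ℕ, Vf (m + j) ∈ Fb := fun j =>
    hFb ▸ Submodule.subset_span (Or.inr ⟨j, rfl⟩)
  -- UU brackets lie in span of W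
  have hUUmem : ∀ i j : ℕ, ⁅Uf (m + i), Uf (m + j)⁆ ∈ Submodule.span k (Set.range W) := by
    intro i j
    rcases Nat.eq_zero_or_pos (i + j) with h0 | hpos
    · have hi : i = 0 := by omega
      have hj : j = 0 := by omega
      subst hi; subst hj
      rw [hUU]
      simp
    · obtain ⟨s, hs⟩ : ∃ s, i + j = s + 1 := ⟨i + j - 1, by omega⟩
      have e1 : m + i + (m + j) + 1 = 2 * m + 2 + s := by omega
      have e2 : m + i + (m + j) - 1 = 2 * m + s := by omega
      rw [hUU, e1, e2]
      exact Submodule.smul_mem _ _ (Submodule.subset_span ⟨s, rfl⟩)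
  -- W s is a scalar multiple of a bracket of generators
  have hWbr : ∀ s : ℕ, W s = ((s : k) + 1)⁻¹ • ⁅Uf (m + (s + 1)), Uf (m + 0)⁆ := by
    intro s
    have e1 : m + (s + 1) + (m + 0) + 1 = 2 * m + 2 + s := by omega
    have e2 : m + (s + 1) + (m + 0) - 1 = 2 * m + s := by omega
    have hc : ((((m + (s + 1) : ℕ) : ℤ) - ((m + 0 : ℕ) : ℤ)) : k) = (s : k) + 1 := by
      push_cast; ring
    have hne : ((s : k) + 1) ≠ 0 := by
      have := Nat.cast_add_one_ne_zero (R := k) s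
      push_cast at this
      exact this
    rw [hUU, e1, e2, hc, smul_smul, inv_mul_cancel₀ hne, one_smul]
  have hWmemO : ∀ s : ℕ, W s ∈ Submodule.span k {x : b | ∃ y ∈ FO, ∃ z ∈ FO, x = ⁅y, z⁆} := by
    intro s
    rw [hWbr s]
    exact Submodule.smul_mem _ _
      (Submodule.subset_span ⟨_, hUFO (s + 1), _, hUFO 0, rfl⟩)
  have hWmemb : ∀ s : ℕ, W s ∈ Submodule.span k {x : b | ∃ y ∈ Fb, ∃ z ∈ Fb, x = ⁅y, z⁆} := by
    intro s
    rw [hWbr s]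
    exact Submodule.smul_mem _ _
      (Submodule.subset_span ⟨_, hUFb (s + 1), _, hUFb 0, rfl⟩)
  -- (i) first part
  have hDOW : DO = Submodule.span k (Set.range W) := by
    rw [hDO]
    refine le_antisymm ?_ (Submodule.span_le.2 ?_)
    · rw [hFO, span_brackets_eq, Submodule.span_le]
      rintro x ⟨u, ⟨i, rfl⟩, v, ⟨j, rfl⟩, rfl⟩
      exact hUUmem i j
    · rintro x ⟨s, rfl⟩
      exact hWmemO s
  -- UV brackets lie in span (range W ∪ Vset)
  set Vset : Set b := Set.range fun j : ℕ => Vf (2 * m + j) with hVsetdef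
  have hUVmem : ∀ i j : ℕ,
      ⁅Uf (m + i), Vf (m + j)⁆ ∈ Submodule.span k (Set.range W ∪ Vset) := by
    intro i j
    rcases Nat.eq_zero_or_pos (i + j) with h0 | hpos
    · have hi : i = 0 := by omega
      have hj : j = 0 := by omega
      subst hi; subst hj
      rw [hUV]
      have e1 : m + 0 + (m + 0) + 1 = 2 * m + 1 := by omega
      have hc2 : ((4 * (((m + 0 : ℕ) : ℤ) - ((m + 0 : ℕ) : ℤ))) : k) = 0 := by
        push_cast; ring
      rw [e1, hc2, zero_smul, sub_zero]
      exact Submodule.smul_mem _ _ (Submodule.subset_span (Or.inr ⟨1, rfl⟩))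
    · obtain ⟨s, hs⟩ : ∃ s, i + j = s + 1 := ⟨i + j - 1, by omega⟩
      have e1 : m + i + (m + j) + 1 = 2 * m + (s + 2) := by omega
      have e2 : m + i + (m + j) - 1 = 2 * m + s := by omega
      rw [hUV, e1, e2]
      exact sub_mem
        (Submodule.smul_mem _ _ (Submodule.subset_span (Or.inr ⟨s + 2, rfl⟩)))
        (Submodule.smul_mem _ _ (Submodule.subset_span (Or.inr ⟨s, rfl⟩)))
  -- each Vf (2m + t) lies in the derived span of Fb
  have hVmem : ∀ t : ℕ,
      Vf (2 * m + t) ∈ Submodule.span k {x : b | ∃ y ∈ Fb, ∃ z ∈ Fb, x = ⁅y, z⁆} := by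
    intro t
    rcases t with _ | s
    · -- Vf (2m) = 4⁻¹ • ⁅Uf m, Vf (m+1)⁆
      have hbr : ⁅Uf (m + 0), Vf (m + 1)⁆ ∈
          Submodule.span k {x : b | ∃ y ∈ Fb, ∃ z ∈ Fb, x = ⁅y, z⁆} :=
        Submodule.subset_span ⟨_, hUFb 0, _, hVFb 1, rfl⟩
      have hval : ⁅Uf (m + 0), Vf (m + 1)⁆ = (4 : k) • Vf (2 * m + 0) := by
        rw [hUV]
        have e2 : m + 0 + (m + 1) - 1 = 2 * m + 0 := by omega
        have hc1 : ((((m + 0 : ℕ) : ℤ) - ((m + 1 : ℕ) : ℤ) + 1) : k) = 0 := by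
          push_cast; ring
        have hc2 : ((4 * (((m + 0 : ℕ) : ℤ) - ((m + 1 : ℕ) : ℤ))) : k) = -4 := by
          push_cast; ring
        rw [e2, hc1, hc2, zero_smul, zero_sub, neg_smul, neg_neg]
      have h4 : (4 : k) ≠ 0 := by norm_num
      have : Vf (2 * m + 0) = (4 : k)⁻¹ • ⁅Uf (m + 0), Vf (m + 1)⁆ := by
        rw [hval, smul_smul, inv_mul_cancel₀ h4, one_smul]
      rw [this]
      exact Submodule.smul_mem _ _ hbr
    · -- Vf (2m + s + 1) = 2⁻¹ • (⁅Uf (m+s), Vf m⁆ + ⁅Uf m, Vf (m+s)⁆)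
      have hbrA : ⁅Uf (m + s), Vf (m + 0)⁆ ∈
          Submodule.span k {x : b | ∃ y ∈ Fb, ∃ z ∈ Fb, x = ⁅y, z⁆} :=
        Submodule.subset_span ⟨_, hUFb s, _, hVFb 0, rfl⟩
      have hbrB : ⁅Uf (m + 0), Vf (m + s)⁆ ∈
          Submodule.span k {x : b | ∃ y ∈ Fb, ∃ z ∈ Fb, x = ⁅y, z⁆} :=
        Submodule.subset_span ⟨_, hUFb 0, _, hVFb s, rfl⟩
      have hsum : ⁅Uf (m + s), Vf (m + 0)⁆ + ⁅Uf (m + 0), Vf (m + s)⁆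
          = (2 : k) • Vf (2 * m + (s + 1)) := by
        rw [hUV, hUV]
        have e1 : m + s + (m + 0) + 1 = 2 * m + (s + 1) := by omega
        have e1' : m + 0 + (m + s) + 1 = 2 * m + (s + 1) := by omega
        have e2 : m + 0 + (m + s) - 1 = m + s + (m + 0) - 1 := by omega
        rw [e1, e1', e2]
        have hc1 : ((((m + s : ℕ) : ℤ) - ((m + 0 : ℕ) : ℤ) + 1) : k) = (s : k) + 1 := by
          push_cast; ring
        have hc2 : ((4 * (((m + s : ℕ) : ℤ) - ((m + 0 : ℕ) : ℤ))) : k) = 4 * (s : k) := by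
          push_cast; ring
        have hc3 : ((((m + 0 : ℕ) : ℤ) - ((m + s : ℕ) : ℤ) + 1) : k) = 1 - (s : k) := by
          push_cast; ring
        have hc4 : ((4 * (((m + 0 : ℕ) : ℤ) - ((m + s : ℕ) : ℤ))) : k) = -(4 * (s : k)) := by
          push_cast; ring
        rw [hc1, hc2, hc3, hc4]
        module
      have h2 : (2 : k) ≠ 0 := by norm_num
      have : Vf (2 * m + (s + 1))
          = (2 : k)⁻¹ • (⁅Uf (m + s), Vf (m + 0)⁆ + ⁅Uf (m + 0), Vf (m + s)⁆) := by
        rw [hsum, smul_smul, inv_mul_cancel₀ h2, one_smul]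
      rw [this]
      exact Submodule.smul_mem _ _ (add_mem hbrA hbrB)
  -- (ii) first part
  have hDbW : Db = Submodule.span k (Set.range W ∪ Vset) := by
    rw [hDb]
    refine le_antisymm ?_ (Submodule.span_le.2 ?_)
    · rw [hFb, span_brackets_eq, Submodule.span_le]
      rintro x ⟨u, hu, v, hv, rfl⟩
      rcases hu with ⟨i, rfl⟩ | ⟨i, rfl⟩ <;> rcases hv with ⟨j, rfl⟩ | ⟨j, rfl⟩
      · exact Submodule.span_mono Set.subset_union_left (hUUmem i j)
      · exact hUVmem i j
      · rw [← lie_skew]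
        exact neg_mem (hUVmem j i)
      · rw [hVV]
        exact zero_mem _
    · rintro x (⟨s, rfl⟩ | ⟨t, rfl⟩)
      · exact hWmemb s
      · exact hVmem t
  have hDbsup : Db = DO ⊔ Submodule.span k Vset := by
    rw [hDbW, Submodule.span_union, hDOW]
  -- disjointness
  have hdisj : DO ⊓ Submodule.span k Vset = ⊥ := by
    have hd : Disjoint (Submodule.span k (Set.range Uf)) (Submodule.span k (Set.range Vf)) :=
      (linearIndependent_sum.mp hindep).2.2
    have h1 : DO ≤ Submodule.span k (Set.range Uf) := by
      rw [hDOW, Submodule.span_le]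
      rintro x ⟨s, rfl⟩
      exact sub_mem (Submodule.subset_span ⟨_, rfl⟩)
        (Submodule.smul_mem _ _ (Submodule.subset_span ⟨_, rfl⟩))
    have h2 : Submodule.span k Vset ≤ Submodule.span k (Set.range Vf) := by
      rw [Submodule.span_le]
      rintro x ⟨t, rfl⟩
      exact Submodule.subset_span ⟨_, rfl⟩
    exact disjoint_iff.mp (hd.mono h1 h2)
  -- the basis and the coordinate maps
  have hrange : Set.range (Sum.elim Uf Vf) = Set.range Uf ∪ Set.range Vf :=
    Set.Sum.elim_range Uf Vf
  let B : Module.Basis (ℕ ⊕ ℕ) k b := Module.Basis.mk hindep (by rw [hrange, hspan])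
  have hBU : ∀ i, B (Sum.inl i) = Uf i := fun i => by
    simp [B, Module.Basis.mk_apply]
  have hBV : ∀ i, B (Sum.inr i) = Vf i := fun i => by
    simp [B, Module.Basis.mk_apply]
  let f : b →ₗ[k] (Fin (m + 2) → k) :=
    B.constr k (Sum.elim (rfun k m) fun _ => 0)
  let g : b →ₗ[k] (Fin m → k) :=
    B.constr k (Sum.elim (fun _ => 0) (sfun k m))
  have hfU : ∀ i, f (Uf i) = rfun k m i := fun i => by
    rw [← hBU i]; simp [f, Module.Basis.constr_basis]
  have hfV : ∀ i, f (Vf i) = 0 := fun i => by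
    rw [← hBV i]; simp [f, Module.Basis.constr_basis]
  have hgU : ∀ i, g (Uf i) = 0 := fun i => by
    rw [← hBU i]; simp [g, Module.Basis.constr_basis]
  have hgV : ∀ i, g (Vf i) = sfun k m i := fun i => by
    rw [← hBV i]; simp [g, Module.Basis.constr_basis]
  -- f kills W, g kills everything in DO and Vset maps to 0 in both
  have hfW : ∀ s, f (W s) = 0 := by
    intro s
    simp only [hWdef, map_sub, map_smul, hfU]
    rw [rfun_high]
    exact sub_self _
  have hgW : ∀ s, g (W s) = 0 := by
    intro s
    simp only [hWdef, map_sub, map_smul, hgU, smul_zero, sub_zero]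
  have hDOkerf : DO ≤ LinearMap.ker f := by
    rw [hDOW, Submodule.span_le]
    rintro x ⟨s, rfl⟩
    exact LinearMap.mem_ker.mpr (hfW s)
  have hDOkerg : DO ≤ LinearMap.ker g := by
    rw [hDOW, Submodule.span_le]
    rintro x ⟨s, rfl⟩
    exact LinearMap.mem_ker.mpr (hgW s)
  have hVkerf : Submodule.span k Vset ≤ LinearMap.ker f := by
    rw [Submodule.span_le]
    rintro x ⟨t, rfl⟩
    exact LinearMap.mem_ker.mpr (hfV _)
  have hVkerg : Submodule.span k Vset ≤ LinearMap.ker g := by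
    rw [Submodule.span_le]
    rintro x ⟨t, rfl⟩
    exact LinearMap.mem_ker.mpr (by rw [hgV, sfun_high])
  -- reduction: every Uf (m+j) is congruent mod (span W ≤ P) to the finite part
  have hred : ∀ (P : Submodule k b), (∀ s, W s ∈ P) → ∀ j : ℕ,
      Uf (m + j) ∈ P ⊔ Submodule.span k (Set.range fun t : Fin (m + 2) => Uf (m + (t : ℕ))) := by
    intro P hP j
    induction j using Nat.strong_induction_on with
    | _ j ih =>
      by_cases hj : j < m + 2
      · exact Submodule.mem_sup_right (Submodule.subset_span ⟨⟨j, hj⟩, rfl⟩)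
      · have e1 : 2 * m + 2 + (j - (m + 2)) = m + j := by omega
        have e2 : 2 * m + (j - (m + 2)) = m + (j - 2) := by omega
        have hsplit : Uf (m + j) = W (j - (m + 2)) + (4 : k) • Uf (m + (j - 2)) := by
          rw [hWdef]
          simp only [e1, e2]
          abel
        rw [hsplit]
        exact add_mem (Submodule.mem_sup_left (hP _))
          (Submodule.smul_mem _ _ (ih (j - 2) (by omega)))
  -- evaluating sums of singles
  have hsingle : ∀ (n : ℕ) (c : Fin n → k), (∑ t : Fin n, c t • (Pi.single t 1 : Fin n → k)) = c := by
    intro n c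
    ext t0
    simp [Pi.single_apply, Finset.sum_apply, Finset.sum_ite_eq']
  -- part (i) finrank
  have hkerO : Submodule.comap FO.subtype DO = LinearMap.ker (f ∘ₗ FO.subtype) := by
    ext x
    simp only [Submodule.mem_comap, LinearMap.mem_ker, LinearMap.comp_apply,
      Submodule.coe_subtype]
    constructor
    · intro hx
      exact LinearMap.mem_ker.mp (hDOkerf hx)
    · intro hx
      have hFOle : FO ≤ DO ⊔
          Submodule.span k (Set.range fun t : Fin (m + 2) => Uf (m + (t : ℕ))) := by
        rw [hFO]
        refine Submodule.span_le.mpr ?_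
        rintro y ⟨j, rfl⟩
        exact hred DO (fun s => hDOW ▸ Submodule.subset_span ⟨s, rfl⟩) j
      have hx2 := hFOle x.2
      obtain ⟨d, hd, y, hy, hxy⟩ := Submodule.mem_sup.mp hx2
      obtain ⟨c, hc⟩ := (Submodule.mem_span_range_iff_exists_fun k).mp hy
      have hfy : (0 : Fin (m + 2) → k) = c := by
        calc (0 : Fin (m + 2) → k) = f (x : b) := hx.symm
          _ = f d + f y := by rw [← hxy, map_add]
          _ = f y := by rw [LinearMap.mem_ker.mp (hDOkerf hd), zero_add]
          _ = ∑ t : Fin (m + 2), c t • (Pi.single t 1 : Fin (m + 2) → k) := by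
              rw [← hc, map_sum]
              refine Finset.sum_congr rfl fun t _ => ?_
              rw [map_smul, hfU, rfun_single]
          _ = c := hsingle _ c
      have hy0 : y = 0 := by
        rw [← hc, ← hfy]
        simp
      rw [← hxy, hy0, add_zero]
      exact hd
  have hsurjO : Function.Surjective (f ∘ₗ FO.subtype) := by
    intro w
    refine ⟨⟨∑ t : Fin (m + 2), w t • Uf (m + (t : ℕ)), ?_⟩, ?_⟩
    · exact Submodule.sum_mem _ fun t _ => Submodule.smul_mem _ _ (hUFO t)
    · simp only [LinearMap.comp_apply, Submodule.coe_subtype, map_sum, map_smul, hfU]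
      calc (∑ t : Fin (m + 2), w t • rfun k m (m + (t : ℕ)))
          = ∑ t : Fin (m + 2), w t • (Pi.single t 1 : Fin (m + 2) → k) := by
            refine Finset.sum_congr rfl fun t _ => by rw [rfun_single]
        _ = w := hsingle _ w
  have hfinO : Module.finrank k (FO ⧸ Submodule.comap FO.subtype DO) = m + 2 := by
    rw [hkerO, LinearEquiv.finrank_eq (LinearMap.quotKerEquivOfSurjective _ hsurjO),
      Module.finrank_fin_fun]
  -- part (ii) finrank
  let f2 : b →ₗ[k] (Fin (m + 2) → k) × (Fin m → k) := f.prod g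
  have hDbker : Db ≤ LinearMap.ker f2 := by
    rw [hDbsup]
    refine sup_le ?_ ?_
    · intro x hx
      exact LinearMap.mem_ker.mpr
        (Prod.ext (LinearMap.mem_ker.mp (hDOkerf hx)) (LinearMap.mem_ker.mp (hDOkerg hx)))
    · intro x hx
      exact LinearMap.mem_ker.mpr
        (Prod.ext (LinearMap.mem_ker.mp (hVkerf hx)) (LinearMap.mem_ker.mp (hVkerg hx)))
  have hkerb : Submodule.comap Fb.subtype Db = LinearMap.ker (f2 ∘ₗ Fb.subtype) := by
    ext x
    simp only [Submodule.mem_comap, LinearMap.mem_ker, LinearMap.comp_apply,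
      Submodule.coe_subtype]
    constructor
    · intro hx
      exact LinearMap.mem_ker.mp (hDbker hx)
    · intro hx
      have hFble : Fb ≤ Db ⊔
          (Submodule.span k (Set.range fun t : Fin (m + 2) => Uf (m + (t : ℕ))) ⊔
           Submodule.span k (Set.range fun t : Fin m => Vf (m + (t : ℕ)))) := by
        rw [hFb, Submodule.span_le]
        rintro y (⟨j, rfl⟩ | ⟨j, rfl⟩)
        · have := hred Db (fun s => hDbsup ▸ Submodule.mem_sup_left
            (hDOW ▸ Submodule.subset_span ⟨s, rfl⟩)) j
          exact sup_le_sup_left le_sup_left Db this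
        · show Vf (m + j) ∈ _
          by_cases hj : j < m
          · exact Submodule.mem_sup_right (Submodule.mem_sup_right
              (Submodule.subset_span ⟨⟨j, hj⟩, rfl⟩))
          · have e : m + j = 2 * m + (j - m) := by omega
            rw [e]
            exact Submodule.mem_sup_left (hDbsup ▸ Submodule.mem_sup_right
              (Submodule.subset_span ⟨j - m, rfl⟩))
      have hx2 := hFble x.2
      obtain ⟨d, hd, y, hy, hxy⟩ := Submodule.mem_sup.mp hx2
      obtain ⟨y1, hy1, y2, hy2, hysum⟩ := Submodule.mem_sup.mp hy
      obtain ⟨c1, hc1⟩ := (Submodule.mem_span_range_iff_exists_fun k).mp hy1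
      obtain ⟨c2, hc2⟩ := (Submodule.mem_span_range_iff_exists_fun k).mp hy2
      have hf2d := LinearMap.mem_ker.mp (hDbker hd)
      have hfd : f d = 0 := congrArg Prod.fst hf2d
      have hgd : g d = 0 := congrArg Prod.snd hf2d
      have hfx : f (x : b) = 0 := congrArg Prod.fst hx
      have hgx : g (x : b) = 0 := congrArg Prod.snd hx
      have hfy1 : f y1 = c1 := by
        rw [← hc1, map_sum]
        calc (∑ t : Fin (m + 2), f (c1 t • Uf (m + (t : ℕ))))
            = ∑ t : Fin (m + 2), c1 t • (Pi.single t 1 : Fin (m + 2) → k) := by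
              refine Finset.sum_congr rfl fun t _ => by rw [map_smul, hfU, rfun_single]
          _ = c1 := hsingle _ c1
      have hfy2 : f y2 = 0 := by
        rw [← hc2, map_sum]
        refine Finset.sum_eq_zero fun t _ => by rw [map_smul, hfV, smul_zero]
      have hgy1 : g y1 = 0 := by
        rw [← hc1, map_sum]
        refine Finset.sum_eq_zero fun t _ => by rw [map_smul, hgU, smul_zero]
      have hgy2 : g y2 = c2 := by
        rw [← hc2, map_sum]
        calc (∑ t : Fin m, g (c2 t • Vf (m + (t : ℕ))))
            = ∑ t : Fin m, c2 t • (Pi.single t 1 : Fin m → k) := by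
              refine Finset.sum_congr rfl fun t _ => by rw [map_smul, hgV, sfun_single]
          _ = c2 := hsingle _ c2
      have hc10 : c1 = 0 := by
        have : f (x : b) = c1 := by
          rw [← hxy, ← hysum, map_add, map_add, hfd, hfy1, hfy2, zero_add, add_zero]
        rw [← this, hfx]
      have hc20 : c2 = 0 := by
        have : g (x : b) = c2 := by
          rw [← hxy, ← hysum, map_add, map_add, hgd, hgy1, hgy2, zero_add, zero_add]
        rw [← this, hgx]
      have hy10 : y1 = 0 := by
        rw [← hc1, hc10]
        simp
      have hy20 : y2 = 0 := by
        rw [← hc2, hc20]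
        simp
      rw [← hxy, ← hysum, hy10, hy20, add_zero, add_zero]
      exact hd
  have hsurjb : Function.Surjective (f2 ∘ₗ Fb.subtype) := by
    rintro ⟨w1, w2⟩
    refine ⟨⟨(∑ t : Fin (m + 2), w1 t • Uf (m + (t : ℕ)))
        + ∑ t : Fin m, w2 t • Vf (m + (t : ℕ)), ?_⟩, ?_⟩
    · exact add_mem
        (Submodule.sum_mem _ fun t _ => Submodule.smul_mem _ _ (hUFb t))
        (Submodule.sum_mem _ fun t _ => Submodule.smul_mem _ _ (hVFb t))
    · have hfval : f ((∑ t : Fin (m + 2), w1 t • Uf (m + (t : ℕ)))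
          + ∑ t : Fin m, w2 t • Vf (m + (t : ℕ))) = w1 := by
        rw [map_add, map_sum, map_sum]
        have h0 : (∑ t : Fin m, f (w2 t • Vf (m + (t : ℕ)))) = 0 :=
          Finset.sum_eq_zero fun t _ => by rw [map_smul, hfV, smul_zero]
        rw [h0, add_zero]
        calc (∑ t : Fin (m + 2), f (w1 t • Uf (m + (t : ℕ))))
            = ∑ t : Fin (m + 2), w1 t • (Pi.single t 1 : Fin (m + 2) → k) := by
              refine Finset.sum_congr rfl fun t _ => by rw [map_smul, hfU, rfun_single]
          _ = w1 := hsingle _ w1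
      have hgval : g ((∑ t : Fin (m + 2), w1 t • Uf (m + (t : ℕ)))
          + ∑ t : Fin m, w2 t • Vf (m + (t : ℕ))) = w2 := by
        rw [map_add, map_sum, map_sum]
        have h0 : (∑ t : Fin (m + 2), g (w1 t • Uf (m + (t : ℕ)))) = 0 :=
          Finset.sum_eq_zero fun t _ => by rw [map_smul, hgU, smul_zero]
        rw [h0, zero_add]
        calc (∑ t : Fin m, g (w2 t • Vf (m + (t : ℕ))))
            = ∑ t : Fin m, w2 t • (Pi.single t 1 : Fin m → k) := by
              refine Finset.sum_congr rfl fun t _ => by rw [map_smul, hgV, sfun_single]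
          _ = w2 := hsingle _ w2
      exact Prod.ext hfval hgval
  have hfinb : Module.finrank k (Fb ⧸ Submodule.comap Fb.subtype Db) = 2 * m + 2 := by
    rw [hkerb, LinearEquiv.finrank_eq (LinearMap.quotKerEquivOfSurjective _ hsurjb),
      Module.finrank_prod, Module.finrank_fin_fun, Module.finrank_fin_fun]
    omega
  exact ⟨⟨hDOW, hfinO⟩, hDbsup, hdisj, hfinb⟩
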